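/- arXiv:2412.16683 — 2 statements merged into one kernel-verified Lean document; each statement's English description precedes it below -/
import Mathlib

section
/- Let $U: \mathbb{R} \to M_d(\mathbb{R})$ and $v: \mathbb{R} \to \mathbb{R}$ be differentiable and satisfy the gradient flow $\dot U = v\Lambda(-v\Gamma U + I)\Lambda$ and $\dot v = \mathrm{Tr}[\Lambda(-v\Gamma U + I)\Lambda U^\top]$, where $\Lambda, \Gamma$ are symmetric commuting matrices. Then for all $t$, $v(t)^2 - \mathrm{Tr}[U(t)U(t)^\top] = v(0)^2 - \mathrm{Tr}[U(0)U(0)^\top]$; that is, $v^2 - \mathrm{Tr}(UU^\top)$ is a conserved quantity of the flow. -/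
open Matrix

attribute [local instance] Matrix.normedAddCommGroup Matrix.normedSpace

theorem conserved_quantity (d : ℕ)
    (Λ Γ : Matrix (Fin d) (Fin d) ℝ) (hΛ : Λ.IsSymm) (hΓ : Γ.IsSymm)
    (hcomm : Λ * Γ = Γ * Λ)
    (U : ℝ → Matrix (Fin d) (Fin d) ℝ) (v : ℝ → ℝ)
    (hU : ∀ t, HasDerivAt U (v t • (Λ * (-(v t) • (Γ * U t) + 1) * Λ)) t)
    (hv : ∀ t, HasDerivAt v ((Λ * (-(v t) • (Γ * U t) + 1) * Λ * (U t)ᵀ).trace) t) :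
    ∀ t, (v t) ^ 2 - (U t * (U t)ᵀ).trace = (v 0) ^ 2 - (U 0 * (U 0)ᵀ).trace := by
  intro t
  set f : ℝ → ℝ := fun s => (v s) ^ 2 - (U s * (U s)ᵀ).trace with hf
  -- entry evaluation as a continuous linear map
  have hentry : ∀ (i j : Fin d) (s : ℝ),
      HasDerivAt (fun s => U s i j)
        ((v s • (Λ * (-(v s) • (Γ * U s) + 1) * Λ)) i j) s := by
    intro i j s
    let e : Matrix (Fin d) (Fin d) ℝ →L[ℝ] ℝ :=
      LinearMap.toContinuousLinearMap
        { toFun := fun M => M i j,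
          map_add' := fun _ _ => rfl,
          map_smul' := fun _ _ => rfl }
    exact e.hasFDerivAt.comp_hasDerivAt s (hU s)
  have hderiv : ∀ s, HasDerivAt f 0 s := by
    intro s
    have h1 : HasDerivAt (fun s => (v s) ^ 2)
        (2 * v s * (Λ * (-(v s) • (Γ * U s) + 1) * Λ * (U s)ᵀ).trace) s := by
      have := (hv s).fun_pow 2
      simpa [mul_comm, mul_assoc] using this
    have h2 : HasDerivAt (fun s => (U s * (U s)ᵀ).trace)
        (∑ i, ∑ j, (2 * U s i j *
          ((v s • (Λ * (-(v s) • (Γ * U s) + 1) * Λ)) i j))) s := by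
      have hsum : (fun s' => (U s' * (U s')ᵀ).trace)
          = fun s' => ∑ i, ∑ j, (U s' i j) ^ 2 := by
        funext s'
        simp [Matrix.trace, Matrix.mul_apply, Matrix.transpose_apply,
          Matrix.diag, sq]
      rw [hsum]
      refine HasDerivAt.fun_sum fun i _ => HasDerivAt.fun_sum fun j _ => ?_
      have := (hentry i j s).fun_pow 2
      simpa [mul_comm, mul_assoc] using this
    have h3 := h1.sub h2
    have key : 2 * v s * (Λ * (-(v s) • (Γ * U s) + 1) * Λ * (U s)ᵀ).trace -
        (∑ i, ∑ j, (2 * U s i j *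
          ((v s • (Λ * (-(v s) • (Γ * U s) + 1) * Λ)) i j))) = 0 := by
      set T := Λ * (-(v s) • (Γ * U s) + 1) * Λ with hT
      have htr : (T * (U s)ᵀ).trace = ∑ i, ∑ j, T i j * U s i j := by
        simp [Matrix.trace, Matrix.mul_apply, Matrix.transpose_apply, Matrix.diag]
      rw [htr, sub_eq_zero, Finset.mul_sum]
      refine Finset.sum_congr rfl fun i _ => ?_
      rw [Finset.mul_sum]
      refine Finset.sum_congr rfl fun j _ => ?_
      simp [Matrix.smul_apply]
      ring
    rw [key] at h3
    exact h3
  have hdiff : Differentiable ℝ f := fun s => (hderiv s).differentiableAt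
  have := is_const_of_deriv_eq_zero hdiff (fun s => (hderiv s).deriv) t 0
  simpa [hf] using this
end

section
/- Let $(U(s), z(s), Z(s), v(s))$ be a differentiable solution of the system $\dot U = v - \alpha v^2 U - \delta z^2 U - \gamma vzZ$, $\dot z = Z - \alpha zZ^2 - \delta zU^2 - \gamma vZU$, $\dot Z = z - \alpha z^2 Z - \beta v^2 Z - \gamma vzU$, $\dot v = U - \alpha vU^2 - \beta vZ^2 - \gamma zZU$. Then the quantity $-U^2 + z^2 - Z^2 + v^2$ is constant along the solution. -/
theorem kappa_invariant (α β γ δ : ℝ) (U z Z v : ℝ → ℝ)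
    (hU : ∀ s, HasDerivAt U (v s - α * (v s) ^ 2 * U s - δ * (z s) ^ 2 * U s - γ * v s * z s * Z s) s)
    (hz : ∀ s, HasDerivAt z (Z s - α * z s * (Z s) ^ 2 - δ * z s * (U s) ^ 2 - γ * v s * Z s * U s) s)
    (hZ : ∀ s, HasDerivAt Z (z s - α * (z s) ^ 2 * Z s - β * (v s) ^ 2 * Z s - γ * v s * z s * U s) s)
    (hv : ∀ s, HasDerivAt v (U s - α * v s * (U s) ^ 2 - β * v s * (Z s) ^ 2 - γ * z s * Z s * U s) s) :
    ∀ s : ℝ, -(U s) ^ 2 + (z s) ^ 2 - (Z s) ^ 2 + (v s) ^ 2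
      = -(U 0) ^ 2 + (z 0) ^ 2 - (Z 0) ^ 2 + (v 0) ^ 2 := by
  have key : ∀ s : ℝ, HasDerivAt (fun t => -(U t) ^ 2 + (z t) ^ 2 - (Z t) ^ 2 + (v t) ^ 2) 0 s := by
    intro s
    have h : HasDerivAt (fun t => -(U t) ^ 2 + (z t) ^ 2 - (Z t) ^ 2 + (v t) ^ 2) _ s := ((((hU s).pow 2).neg.add ((hz s).pow 2)).sub ((hZ s).pow 2)).add ((hv s).pow 2)
    convert h using 1
    ring
  intro s
  have := is_const_of_deriv_eq_zero (f := fun t => -(U t) ^ 2 + (z t) ^ 2 - (Z t) ^ 2 + (v t) ^ 2)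
    (fun t => (key t).differentiableAt) (fun t => (key t).deriv) s 0
  simpa using this
end
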